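/- (Theorem 2, maxmin bound.) Assume N ≥ |𝓜| + 1 and 1 ≤ k ≤ N, and let 𝔾 be a nonempty set of Borel probability measures on valuations with ambiguity set 𝔽 = {F : F̄ ∈ 𝔾}. Then inf_{F∈𝔽} E_F[Rᵏ_𝓜(v)] ≥ inf_{F∈𝔽} V_𝓜(F) − (k−1)·|𝓜|·v̄/N. -/

import Mathlib

open MeasureTheory
open scoped ENNReal BigOperators

namespace RankGuaranteedAuctions

/-- A bundle of items, where the set of items is `Fin M`. -/
abbrev Bundle (M : ℕ) := Finset (Fin M)

/-- A valuation assigns a real value to every bundle. -/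
abbrev Valuation (M : ℕ) := Bundle M → ℝ

/-- A valuation is normalized: value `0` for the empty bundle and values in `[0, vbar]`. -/
def IsValuation (M : ℕ) (vbar : ℝ) (v : Valuation M) : Prop :=
  v ∅ = 0 ∧ ∀ b : Bundle M, 0 ≤ v b ∧ v b ≤ vbar

/-- A menu is a nonempty collection of nonempty bundles. -/
def IsMenu (M : ℕ) (Menu : Finset (Bundle M)) : Prop :=
  Menu.Nonempty ∧ ∅ ∉ Menu

/-- The complete menu `2^S` of all nonempty bundles. -/
noncomputable def completeMenu (M : ℕ) : Finset (Bundle M) :=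
  Finset.univ.erase ∅

/-- A feasible allocation: a set of pairwise disjoint bundles from the menu. -/
def Feasible (M : ℕ) (Menu X : Finset (Bundle M)) : Prop :=
  X ⊆ Menu ∧ ∀ b ∈ X, ∀ b' ∈ X, b ≠ b' → Disjoint b b'

/-- The maximum of `∑ b ∈ X, f b` over feasible allocations `X` from the menu. -/
noncomputable def maxAlloc (M : ℕ) (Menu : Finset (Bundle M)) (f : Bundle M → ℝ) : ℝ :=
  sSup {y : ℝ | ∃ X : Finset (Bundle M), Feasible M Menu X ∧ y = ∑ b ∈ X, f b}

/-- The `k`-th highest value among `w 0, …, w (N-1)` (for `1 ≤ k ≤ N`):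
the maximum over sets `T` of `k` bidders of the minimum of `w` on `T`. -/
noncomputable def kthHighest (N : ℕ) (w : Fin N → ℝ) (k : ℕ) : ℝ :=
  sSup {x : ℝ | ∃ T : Finset (Fin N), T.card = k ∧ x = sInf (w '' (T : Set (Fin N)))}

/-- The `k`-th rank guarantee `R^k_𝓜(v)`. -/
noncomputable def rankGuarantee (M N : ℕ) (Menu : Finset (Bundle M))
    (v : Fin N → Valuation M) (k : ℕ) : ℝ :=
  maxAlloc M Menu fun b => kthHighest N (fun n => v n b) k

/-- The ex-post efficient surplus: the maximum over feasible allocations `X` with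
`|X| ≤ N` and injective assignments `ι` of bundles in `X` to bidders of the total value. -/
noncomputable def surplusEx (M N : ℕ) (Menu : Finset (Bundle M))
    (v : Fin N → Valuation M) : ℝ :=
  sSup {y : ℝ | ∃ X : Finset (Bundle M), Feasible M Menu X ∧ X.card ≤ N ∧
    ∃ ι : Bundle M → Fin N, Set.InjOn ι ↑X ∧ y = ∑ b ∈ X, v (ι b) b}

/-- The average `F̄ = (1/N) ∑ₙ Fₙ` of the bidder-marginals of `F`. -/
noncomputable def avgMarginal (M N : ℕ) (F : Measure (Fin N → Valuation M)) :
    Measure (Valuation M) :=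
  (N : ℝ≥0∞)⁻¹ • ∑ n : Fin N, F.map (fun v => v n)

/-- The ex-ante efficient surplus `V_𝓜(F)`. -/
noncomputable def Vsurplus (M N : ℕ) (Menu : Finset (Bundle M))
    (F : Measure (Fin N → Valuation M)) : ℝ :=
  ∫ v, surplusEx M N Menu v ∂F

/-- A Borel probability measure on valuation profiles (supported on profiles of
valuations bounded by `vbar`). -/
def ProfileOK (M N : ℕ) (vbar : ℝ) (F : Measure (Fin N → Valuation M)) : Prop :=
  IsProbabilityMeasure F ∧ F {v | ∀ n, IsValuation M vbar (v n)} = 1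

/-- A Borel probability measure on valuations (supported on valuations bounded by `vbar`). -/
def ValOK (M : ℕ) (vbar : ℝ) (G : Measure (Valuation M)) : Prop :=
  IsProbabilityMeasure G ∧ G {w | IsValuation M vbar w} = 1

/-- `κ` is a partition of the bundle `b` into nonempty, pairwise disjoint parts. -/
def IsPartitionOf (M : ℕ) (κ : Finset (Bundle M)) (b : Bundle M) : Prop :=
  (∀ c ∈ κ, c ≠ ∅) ∧ (∀ c ∈ κ, ∀ c' ∈ κ, c ≠ c' → Disjoint c c') ∧ κ.sup id = b

/-- Feasibility for homogeneous goods: total number of allocated items is at most `M`. -/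
def FeasibleQ (M : ℕ) (Menu X : Finset (Bundle M)) : Prop :=
  X ⊆ Menu ∧ ∑ b ∈ X, b.card ≤ M

/-- The maximum of `∑ b ∈ X, f b` over homogeneous-goods-feasible allocations `X`. -/
noncomputable def maxAllocQ (M : ℕ) (Menu : Finset (Bundle M)) (f : Bundle M → ℝ) : ℝ :=
  sSup {y : ℝ | ∃ X : Finset (Bundle M), FeasibleQ M Menu X ∧ y = ∑ b ∈ X, f b}

/-- An assignment of pairwise disjoint bundles to the `N` bidders. -/
def IsAssignment (M N : ℕ) (a : Fin N → Bundle M) : Prop :=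
  ∀ n n' : Fin N, n ≠ n' → Disjoint (a n) (a n')

/-- An assignment is efficient if it maximizes total value over all assignments. -/
def IsEfficient (M N : ℕ) (v : Fin N → Valuation M) (a : Fin N → Bundle M) : Prop :=
  IsAssignment M N a ∧
    ∀ a' : Fin N → Bundle M, IsAssignment M N a' → ∑ n, v n (a' n) ≤ ∑ n, v n (a n)

/-- The VCG revenue at the efficient assignment `a`: the sum over bidders `n` of
`max_{assignments to bidders other than n} ∑_{n' ≠ n} v^{n'} − ∑_{n' ≠ n} v^{n'}(a n')`. -/
noncomputable def vcgRevenue (M N : ℕ) (v : Fin N → Valuation M)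
    (a : Fin N → Bundle M) : ℝ :=
  ∑ n : Fin N,
    (sSup {y : ℝ | ∃ a' : Fin N → Bundle M, IsAssignment M N a' ∧ a' n = ∅ ∧
        y = ∑ n' ∈ Finset.univ.erase n, v n' (a' n')}
      - ∑ n' ∈ Finset.univ.erase n, v n' (a n'))

/-- An unbounded valuation: value `0` for the empty bundle and nonnegative values. -/
def IsValuationNN (M : ℕ) (v : Valuation M) : Prop :=
  v ∅ = 0 ∧ ∀ b : Bundle M, 0 ≤ v b

/-- The top-`(k-1)/N` quantile of `v b` under `G`. -/
noncomputable def quantileQ (M N k : ℕ) (G : Measure (Valuation M)) (b : Bundle M) : ℝ :=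
  sInf {q : ℝ | 0 ≤ q ∧ G {w | q < w b} ≤ ((k - 1 : ℕ) : ℝ≥0∞) / (N : ℝ≥0∞)}



section AuxProof

lemma my_measurable_inf' {δ : Type*} [MeasurableSpace δ] {ι : Type*} {s : Finset ι}
    (hs : s.Nonempty) {f : ι → δ → ℝ} (hf : ∀ n ∈ s, Measurable (f n)) :
    Measurable (s.inf' hs f) :=
  Finset.inf'_induction hs _ (fun _f hf _g hg => hf.inf hg) fun n hn => hf n hn

lemma measurable_sSup_image {α : Type*} [MeasurableSpace α] {ι : Type*} [Fintype ι]
    (A : Set ι) (g : ι → α → ℝ) (hg : ∀ i, Measurable (g i)) :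
    Measurable fun x => sSup ((fun i => g i x) '' A) := by
  classical
  rcases A.eq_empty_or_nonempty with h | h
  · simp only [h, Set.image_empty, Real.sSup_empty]
    exact measurable_const
  · have hfin := A.toFinite
    have hs : hfin.toFinset.Nonempty := by
      rwa [Set.Finite.toFinset_nonempty]
    have heq : (fun x => sSup ((fun i => g i x) '' A))
        = fun x => hfin.toFinset.sup' hs (fun i => g i x) := by
      funext x
      rw [Finset.sup'_eq_csSup_image, hfin.coe_toFinset]
    rw [heq]
    have := Finset.measurable_sup' (f := fun i (x : α) => g i x) hs (fun n _ => hg n)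
    convert this using 1
    funext x
    simp [Finset.sup'_apply]

lemma measurable_sInf_image {α : Type*} [MeasurableSpace α] {ι : Type*} [Fintype ι]
    (A : Set ι) (g : ι → α → ℝ) (hg : ∀ i, Measurable (g i)) :
    Measurable fun x => sInf ((fun i => g i x) '' A) := by
  classical
  rcases A.eq_empty_or_nonempty with h | h
  · simp only [h, Set.image_empty, Real.sInf_empty]
    exact measurable_const
  · have hfin := A.toFinite
    have hs : hfin.toFinset.Nonempty := by
      rwa [Set.Finite.toFinset_nonempty]
    have heq : (fun x => sInf ((fun i => g i x) '' A))
        = fun x => hfin.toFinset.inf' hs (fun i => g i x) := by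
      funext x
      rw [Finset.inf'_eq_csInf_image, hfin.coe_toFinset]
    rw [heq]
    have := my_measurable_inf' (f := fun i (x : α) => g i x) hs (fun n _ => hg n)
    convert this using 1
    funext x
    simp [Finset.inf'_apply]


section Aux
variable {M N k : ℕ}

lemma kthSet_eq (N k : ℕ) (w : Fin N → ℝ) :
    {x : ℝ | ∃ T : Finset (Fin N), T.card = k ∧ x = sInf (w '' (T : Set (Fin N)))}
      = (fun T : Finset (Fin N) => sInf (w '' (T : Set (Fin N)))) '' {T | T.card = k} := by
  ext x; constructor
  · rintro ⟨T, hT, rfl⟩; exact ⟨T, hT, rfl⟩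
  · rintro ⟨T, hT, rfl⟩; exact ⟨T, hT, rfl⟩

lemma kthSet_finite (N k : ℕ) (w : Fin N → ℝ) :
    Set.Finite {x : ℝ | ∃ T : Finset (Fin N), T.card = k ∧ x = sInf (w '' (T : Set (Fin N)))} := by
  rw [kthSet_eq]; exact (Set.toFinite _).image _

lemma kthSet_nonempty (hkN : k ≤ N) (w : Fin N → ℝ) :
    Set.Nonempty {x : ℝ | ∃ T : Finset (Fin N), T.card = k ∧ x = sInf (w '' (T : Set (Fin N)))} := by
  obtain ⟨T, -, hT⟩ := Finset.exists_subset_card_eq (show k ≤ (Finset.univ : Finset (Fin N)).card by simpa using hkN)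
  exact ⟨_, T, hT, rfl⟩

lemma sInf_mem_image {T : Finset (Fin N)} (hT : T.Nonempty) (w : Fin N → ℝ) :
    sInf (w '' (T : Set (Fin N))) ∈ w '' (T : Set (Fin N)) :=
  Set.Nonempty.csInf_mem (by exact (hT.to_set).image w) (((T : Set (Fin N))).toFinite.image w)

lemma kth_le {vbar : ℝ} (hk1 : 1 ≤ k) (hkN : k ≤ N) {w : Fin N → ℝ}
    (hw : ∀ n, w n ≤ vbar) : kthHighest N w k ≤ vbar := by
  refine csSup_le (kthSet_nonempty hkN w) ?_
  rintro x ⟨T, hT, rfl⟩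
  have hTne : T.Nonempty := Finset.card_pos.mp (by omega)
  obtain ⟨n, -, heq⟩ := sInf_mem_image hTne w
  rw [← heq]; exact hw n

lemma kth_nonneg (hk1 : 1 ≤ k) (hkN : k ≤ N) {w : Fin N → ℝ}
    (hw : ∀ n, 0 ≤ w n) : 0 ≤ kthHighest N w k := by
  obtain ⟨x, hx⟩ := kthSet_nonempty hkN w
  refine le_trans ?_ (le_csSup (kthSet_finite N k w).bddAbove hx)
  obtain ⟨T, hT, rfl⟩ := hx
  have hTne : T.Nonempty := Finset.card_pos.mp (by omega)
  obtain ⟨n, -, heq⟩ := sInf_mem_image hTne w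
  rw [← heq]; exact hw n

lemma card_filter_kth_lt (hk1 : 1 ≤ k) (hkN : k ≤ N) (w : Fin N → ℝ) :
    (Finset.univ.filter fun n => kthHighest N w k < w n).card ≤ k - 1 := by
  classical
  by_contra hcon
  push_neg at hcon
  obtain ⟨T, hTsub, hTcard⟩ := Finset.exists_subset_card_eq
    (show k ≤ (Finset.univ.filter fun n => kthHighest N w k < w n).card by omega)
  have h1 : sInf (w '' (T : Set (Fin N))) ≤ kthHighest N w k :=
    le_csSup (kthSet_finite N k w).bddAbove ⟨T, hTcard, rfl⟩
  have hTne : T.Nonempty := Finset.card_pos.mp (by omega)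
  obtain ⟨n, hn, heq⟩ := sInf_mem_image hTne w
  have hmem : n ∈ Finset.univ.filter fun n => kthHighest N w k < w n := hTsub hn
  rw [Finset.mem_filter] at hmem
  rw [← heq] at h1
  linarith [hmem.2]

-- maxAlloc facts
lemma maxAllocSet_eq (M : ℕ) (Menu : Finset (Bundle M)) (f : Bundle M → ℝ) :
    {y : ℝ | ∃ X : Finset (Bundle M), Feasible M Menu X ∧ y = ∑ b ∈ X, f b}
      = (fun X : Finset (Bundle M) => ∑ b ∈ X, f b) '' {X | Feasible M Menu X} := by
  ext x; constructor
  · rintro ⟨X, hX, rfl⟩; exact ⟨X, hX, rfl⟩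
  · rintro ⟨X, hX, rfl⟩; exact ⟨X, hX, rfl⟩

lemma maxAllocSet_finite (M : ℕ) (Menu : Finset (Bundle M)) (f : Bundle M → ℝ) :
    Set.Finite {y : ℝ | ∃ X : Finset (Bundle M), Feasible M Menu X ∧ y = ∑ b ∈ X, f b} := by
  rw [maxAllocSet_eq]; exact (Set.toFinite _).image _

lemma maxAllocSet_zero_mem (M : ℕ) (Menu : Finset (Bundle M)) (f : Bundle M → ℝ) :
    (0:ℝ) ∈ {y : ℝ | ∃ X : Finset (Bundle M), Feasible M Menu X ∧ y = ∑ b ∈ X, f b} :=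
  ⟨∅, ⟨Finset.empty_subset _, by simp⟩, by simp⟩

lemma maxAlloc_nonneg (M : ℕ) (Menu : Finset (Bundle M)) (f : Bundle M → ℝ) :
    0 ≤ maxAlloc M Menu f :=
  le_csSup (maxAllocSet_finite M Menu f).bddAbove (maxAllocSet_zero_mem M Menu f)

lemma le_maxAlloc (M : ℕ) (Menu : Finset (Bundle M)) (f : Bundle M → ℝ)
    {X : Finset (Bundle M)} (hX : Feasible M Menu X) :
    ∑ b ∈ X, f b ≤ maxAlloc M Menu f :=
  le_csSup (maxAllocSet_finite M Menu f).bddAbove ⟨X, hX, rfl⟩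

lemma maxAlloc_le (M : ℕ) (Menu : Finset (Bundle M)) (f : Bundle M → ℝ) {C : ℝ}
    (h : ∀ X : Finset (Bundle M), Feasible M Menu X → ∑ b ∈ X, f b ≤ C) :
    maxAlloc M Menu f ≤ C := by
  refine csSup_le ⟨0, maxAllocSet_zero_mem M Menu f⟩ ?_
  rintro y ⟨X, hX, rfl⟩; exact h X hX

lemma maxAlloc_exists (M : ℕ) (Menu : Finset (Bundle M)) (f : Bundle M → ℝ) :
    ∃ X : Finset (Bundle M), Feasible M Menu X ∧ maxAlloc M Menu f = ∑ b ∈ X, f b :=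
  Set.Nonempty.csSup_mem ⟨0, maxAllocSet_zero_mem M Menu f⟩ (maxAllocSet_finite M Menu f)

lemma maxAlloc_le_card_vbar (M : ℕ) (Menu : Finset (Bundle M)) {f : Bundle M → ℝ} {vbar : ℝ}
    (hvbar : 0 ≤ vbar) (hf : ∀ b, f b ≤ vbar) :
    maxAlloc M Menu f ≤ (Menu.card : ℝ) * vbar := by
  refine maxAlloc_le M Menu f ?_
  intro X hX
  calc ∑ b ∈ X, f b ≤ ∑ _b ∈ X, vbar := Finset.sum_le_sum fun b _ => hf b
    _ = (X.card : ℝ) * vbar := by simp [mul_comm]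
    _ ≤ (Menu.card : ℝ) * vbar := by
        have := Finset.card_le_card hX.1
        exact mul_le_mul_of_nonneg_right (by exact_mod_cast this) hvbar

end Aux

lemma core_ineq (M N : ℕ) (vbar : ℝ) (hvbar : 0 ≤ vbar) (Menu : Finset (Bundle M))
    (k : ℕ) (hk1 : 1 ≤ k) (hkN : k ≤ N)
    (v : Fin N → Valuation M) (hv : ∀ n, IsValuation M vbar (v n)) :
    ∑ n : Fin N, maxAlloc M Menu (v n)
      ≤ (N : ℝ) * rankGuarantee M N Menu v k + ((k:ℝ) - 1) * (Menu.card : ℝ) * vbar := by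
  classical
  set kth : Bundle M → ℝ := fun b => kthHighest N (fun n => v n b) k with hkth
  have hkth0 : ∀ b, 0 ≤ kth b := fun b => kth_nonneg hk1 hkN (fun n => ((hv n).2 b).1)
  have step : ∀ n : Fin N, maxAlloc M Menu (v n)
      ≤ rankGuarantee M N Menu v k + ∑ b ∈ Menu, (if kth b < v n b then vbar else 0) := by
    intro n
    obtain ⟨X, hX, heq⟩ := maxAlloc_exists M Menu (v n)
    rw [heq]
    have h1 : ∀ b ∈ X, v n b ≤ kth b + (if kth b < v n b then vbar else 0) := by
      intro b _
      by_cases h : kth b < v n b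
      · rw [if_pos h]
        have := ((hv n).2 b).2
        linarith [hkth0 b]
      · rw [if_neg h]
        linarith [not_lt.mp h]
    calc ∑ b ∈ X, v n b ≤ ∑ b ∈ X, (kth b + (if kth b < v n b then vbar else 0)) :=
          Finset.sum_le_sum h1
      _ = ∑ b ∈ X, kth b + ∑ b ∈ X, (if kth b < v n b then vbar else 0) :=
          Finset.sum_add_distrib
      _ ≤ rankGuarantee M N Menu v k + ∑ b ∈ Menu, (if kth b < v n b then vbar else 0) := by
          refine add_le_add (le_maxAlloc M Menu kth hX) ?_
          refine Finset.sum_le_sum_of_subset_of_nonneg hX.1 ?_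
          intro b _ _
          split <;> [exact hvbar; exact le_rfl]
  calc ∑ n : Fin N, maxAlloc M Menu (v n)
      ≤ ∑ n : Fin N, (rankGuarantee M N Menu v k
          + ∑ b ∈ Menu, (if kth b < v n b then vbar else 0)) :=
        Finset.sum_le_sum fun n _ => step n
    _ = (N : ℝ) * rankGuarantee M N Menu v k
        + ∑ b ∈ Menu, ∑ n : Fin N, (if kth b < v n b then vbar else 0) := by
        rw [Finset.sum_add_distrib, Finset.sum_const, Finset.sum_comm]
        simp [nsmul_eq_mul]
    _ ≤ (N : ℝ) * rankGuarantee M N Menu v k + ((k:ℝ) - 1) * (Menu.card : ℝ) * vbar := by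
        gcongr (N : ℝ) * rankGuarantee M N Menu v k + ?_
        have hb : ∀ b ∈ Menu, ∑ n : Fin N, (if kth b < v n b then vbar else 0)
            ≤ ((k:ℝ) - 1) * vbar := by
          intro b _
          rw [← Finset.sum_filter, Finset.sum_const, nsmul_eq_mul]
          have hcard := card_filter_kth_lt hk1 hkN (fun n => v n b)
          have hcast : ((Finset.univ.filter fun n => kth b < v n b).card : ℝ) ≤ (k:ℝ) - 1 := by
            have h1 : ((k - 1 : ℕ) : ℝ) = (k:ℝ) - 1 := by
              rw [Nat.cast_sub hk1]; norm_num
            rw [← h1]; exact_mod_cast hcard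
          exact mul_le_mul_of_nonneg_right hcast hvbar
        calc ∑ b ∈ Menu, ∑ n : Fin N, (if kth b < v n b then vbar else 0)
            ≤ ∑ _b ∈ Menu, ((k:ℝ) - 1) * vbar := Finset.sum_le_sum hb
          _ = (Menu.card : ℝ) * (((k:ℝ) - 1) * vbar) := by simp [mul_comm]
          _ = ((k:ℝ) - 1) * (Menu.card : ℝ) * vbar := by ring


section Meas
variable {M N k : ℕ} {α : Type*} [MeasurableSpace α]

lemma measurable_kth_comp (N k : ℕ) (g : Fin N → α → ℝ) (hg : ∀ n, Measurable (g n)) :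
    Measurable fun x => kthHighest N (fun n => g n x) k := by
  have heq : (fun x => kthHighest N (fun n => g n x) k)
      = fun x => sSup ((fun T : Finset (Fin N) =>
          sInf ((fun n => g n x) '' (T : Set (Fin N)))) '' {T | T.card = k}) := by
    funext x; rw [kthHighest, kthSet_eq]
  rw [heq]
  refine measurable_sSup_image _ _ ?_
  intro T
  exact measurable_sInf_image (T : Set (Fin N)) g hg

lemma measurable_maxAlloc_comp (M : ℕ) (Menu : Finset (Bundle M))
    (g : Bundle M → α → ℝ) (hg : ∀ b, Measurable (g b)) :
    Measurable fun x => maxAlloc M Menu (fun b => g b x) := by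
  have heq : (fun x => maxAlloc M Menu (fun b => g b x))
      = fun x => sSup ((fun X : Finset (Bundle M) => ∑ b ∈ X, g b x) '' {X | Feasible M Menu X}) := by
    funext x; rw [maxAlloc, maxAllocSet_eq]
  rw [heq]
  refine measurable_sSup_image _ _ ?_
  intro X
  exact Finset.measurable_sum X fun b _ => hg b

lemma measurable_rankGuarantee (M N : ℕ) (Menu : Finset (Bundle M)) (k : ℕ) :
    Measurable fun v : Fin N → Valuation M => rankGuarantee M N Menu v k := by
  unfold rankGuarantee
  refine measurable_maxAlloc_comp M Menu _ ?_
  intro b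
  exact measurable_kth_comp N k _ fun n =>
    (measurable_pi_apply b).comp (measurable_pi_apply n)

lemma measurable_maxAlloc_eval (M N : ℕ) (Menu : Finset (Bundle M)) (n : Fin N) :
    Measurable fun v : Fin N → Valuation M => maxAlloc M Menu (v n) := by
  refine measurable_maxAlloc_comp (α := Fin N → Valuation M) M Menu (fun b v => v n b) ?_
  intro b
  exact (measurable_pi_apply b).comp (measurable_pi_apply n)

lemma measurable_maxAlloc' (M : ℕ) (Menu : Finset (Bundle M)) :
    Measurable fun w : Valuation M => maxAlloc M Menu w :=
  measurable_maxAlloc_comp M Menu (fun b (w : Valuation M) => w b) fun b => measurable_pi_apply b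

-- surplusEx facts
lemma surplusSet_eq (M N : ℕ) (Menu : Finset (Bundle M)) (v : Fin N → Valuation M) :
    {y : ℝ | ∃ X : Finset (Bundle M), Feasible M Menu X ∧ X.card ≤ N ∧
      ∃ ι : Bundle M → Fin N, Set.InjOn ι ↑X ∧ y = ∑ b ∈ X, v (ι b) b}
    = (fun p : Finset (Bundle M) × (Bundle M → Fin N) => ∑ b ∈ p.1, v (p.2 b) b) ''
        {p | Feasible M Menu p.1 ∧ p.1.card ≤ N ∧ Set.InjOn p.2 ↑p.1} := by
  ext y; constructor
  · rintro ⟨X, h1, h2, ι, h3, rfl⟩; exact ⟨(X, ι), ⟨h1, h2, h3⟩, rfl⟩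
  · rintro ⟨⟨X, ι⟩, ⟨h1, h2, h3⟩, rfl⟩; exact ⟨X, h1, h2, ι, h3, rfl⟩

lemma surplusSet_finite (M N : ℕ) (Menu : Finset (Bundle M)) (v : Fin N → Valuation M) :
    Set.Finite {y : ℝ | ∃ X : Finset (Bundle M), Feasible M Menu X ∧ X.card ≤ N ∧
      ∃ ι : Bundle M → Fin N, Set.InjOn ι ↑X ∧ y = ∑ b ∈ X, v (ι b) b} := by
  rw [surplusSet_eq]; exact (Set.toFinite _).image _

lemma surplusSet_zero_mem (M N : ℕ) (hN : 0 < N) (Menu : Finset (Bundle M))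
    (v : Fin N → Valuation M) :
    (0:ℝ) ∈ {y : ℝ | ∃ X : Finset (Bundle M), Feasible M Menu X ∧ X.card ≤ N ∧
      ∃ ι : Bundle M → Fin N, Set.InjOn ι ↑X ∧ y = ∑ b ∈ X, v (ι b) b} :=
  ⟨∅, ⟨Finset.empty_subset _, by simp⟩, by simp [hN.le],
    fun _ => ⟨0, hN⟩, by simp, by simp⟩

lemma surplusEx_nonneg (M N : ℕ) (hN : 0 < N) (Menu : Finset (Bundle M))
    (v : Fin N → Valuation M) : 0 ≤ surplusEx M N Menu v :=
  le_csSup (surplusSet_finite M N Menu v).bddAbove (surplusSet_zero_mem M N hN Menu v)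

lemma surplusEx_diag (M N : ℕ) (Menu : Finset (Bundle M)) (hN : Menu.card + 1 ≤ N)
    (w : Valuation M) :
    surplusEx M N Menu (fun _ => w) = maxAlloc M Menu w := by
  have hN0 : 0 < N := by omega
  unfold surplusEx maxAlloc
  congr 1
  ext y; constructor
  · rintro ⟨X, h1, h2, ι, h3, rfl⟩; exact ⟨X, h1, rfl⟩
  · rintro ⟨X, h1, rfl⟩
    have hcard : X.card ≤ N := le_trans (Finset.card_le_card h1.1) (by omega)
    refine ⟨X, h1, hcard, ?_⟩
    classical
    refine ⟨fun b => if h : b ∈ X then Fin.castLE hcard (X.equivFin ⟨b, h⟩)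
      else ⟨0, hN0⟩, ?_, rfl⟩
    intro b hb b' hb' heq
    simp only [Finset.mem_coe] at hb hb'
    simp only [dif_pos hb, dif_pos hb'] at heq
    have h2 := Fin.castLE_injective hcard heq
    have h3 := X.equivFin.injective h2
    exact Subtype.ext_iff.mp h3

end Meas

-- new lemmas
lemma integrable_of_ae_bound {α : Type*} [MeasurableSpace α] {μ : Measure α}
    [IsFiniteMeasure μ] {f : α → ℝ} (hf : Measurable f) {C : ℝ}
    (h : ∀ᵐ x ∂μ, |f x| ≤ C) : Integrable f μ :=
  Integrable.mono' (integrable_const C) hf.aestronglyMeasurable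
    (by simpa [Real.norm_eq_abs] using h)

lemma measurableSet_isValuation (M : ℕ) (vbar : ℝ) :
    MeasurableSet {w : Valuation M | IsValuation M vbar w} := by
  have : {w : Valuation M | IsValuation M vbar w}
      = ((fun w : Valuation M => w ∅) ⁻¹' {0})
        ∩ ⋂ b : Bundle M, ((fun w : Valuation M => w b) ⁻¹' Set.Icc 0 vbar) := by
    ext w
    simp only [IsValuation, Set.mem_inter_iff, Set.mem_preimage, Set.mem_singleton_iff,
      Set.mem_iInter, Set.mem_Icc, Set.mem_setOf_eq]
  rw [this]
  exact ((measurable_pi_apply _) (measurableSet_singleton 0)).inter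
    (MeasurableSet.iInter fun b => (measurable_pi_apply b) measurableSet_Icc)

lemma measurableSet_profile (M N : ℕ) (vbar : ℝ) :
    MeasurableSet {v : Fin N → Valuation M | ∀ n, IsValuation M vbar (v n)} := by
  have : {v : Fin N → Valuation M | ∀ n, IsValuation M vbar (v n)}
      = ⋂ n : Fin N, ((fun v : Fin N → Valuation M => v n) ⁻¹'
          {w | IsValuation M vbar w}) := by
    ext v; simp
  rw [this]
  exact MeasurableSet.iInter fun n =>
    (measurable_pi_apply n) (measurableSet_isValuation M vbar)


end AuxProof

/-- Theorem 2, maxmin bound: with `N ≥ |𝓜| + 1`, `1 ≤ k ≤ N`, and the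
ambiguity set `𝔽 = {F : F̄ ∈ 𝔾}`,
`inf_{F∈𝔽} E_F[R^k_𝓜(v)] ≥ inf_{F∈𝔽} V_𝓜(F) − (k−1)·|𝓜|·v̄/N`. -/
theorem maxmin_rank_guarantee_bound
    (M N : ℕ) (hM : 1 ≤ M) (vbar : ℝ) (hvbar : 0 ≤ vbar)
    (Menu : Finset (Bundle M)) (hMenu : IsMenu M Menu)
    (hN : Menu.card + 1 ≤ N) (k : ℕ) (hk1 : 1 ≤ k) (hkN : k ≤ N)
    (GG : Set (Measure (Valuation M))) (hGGne : GG.Nonempty)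
    (hGG : ∀ G ∈ GG, ValOK M vbar G) :
    sInf ((fun F => ∫ v, rankGuarantee M N Menu v k ∂F) ''
        {F : Measure (Fin N → Valuation M) |
          ProfileOK M N vbar F ∧ avgMarginal M N F ∈ GG}) ≥
      sInf ((fun F => Vsurplus M N Menu F) ''
        {F : Measure (Fin N → Valuation M) |
          ProfileOK M N vbar F ∧ avgMarginal M N F ∈ GG})
        - ((k : ℝ) - 1) * (Menu.card : ℝ) * vbar / (N : ℝ) := by
  classical
  have hN0 : 0 < N := by omega
  have hNR : (N : ℝ) ≠ 0 := Nat.cast_ne_zero.mpr (by omega)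
  have hc : 0 ≤ ((k : ℝ) - 1) * (Menu.card : ℝ) * vbar / (N : ℝ) := by
    apply div_nonneg _ (Nat.cast_nonneg N)
    apply mul_nonneg (mul_nonneg _ (Nat.cast_nonneg _)) hvbar
    have : (1:ℝ) ≤ (k:ℝ) := by exact_mod_cast hk1
    linarith
  set 𝔽 := {F : Measure (Fin N → Valuation M) |
    ProfileOK M N vbar F ∧ avgMarginal M N F ∈ GG} with h𝔽
  rcases 𝔽.eq_empty_or_nonempty with hFe | hFne
  · rw [hFe]
    simp only [Set.image_empty, Real.sInf_empty, ge_iff_le]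
    linarith
  have hBdd : BddBelow ((fun F => Vsurplus M N Menu F) '' 𝔽) := by
    refine ⟨0, ?_⟩
    rintro y ⟨F, hF, rfl⟩
    exact integral_nonneg fun v => surplusEx_nonneg M N hN0 Menu v
  rw [ge_iff_le]
  refine le_csInf (hFne.image (fun F => ∫ v, rankGuarantee M N Menu v k ∂F)) ?_
  rintro a ⟨F, hFmem, rfl⟩
  obtain ⟨hProf, hGmem⟩ := hFmem
  obtain ⟨hFprob, hFsupp⟩ := hProf
  set G := avgMarginal M N F with hG
  obtain ⟨hGprob, hGsupp⟩ := hGG G hGmem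
  haveI := hFprob
  haveI := hGprob
  -- the diagonal profile measure
  set diag : Valuation M → (Fin N → Valuation M) := fun w _ => w with hdiagdef
  have hdiag : Measurable diag := measurable_pi_lambda _ fun _ => measurable_id
  set F' : Measure (Fin N → Valuation M) := G.map diag with hF'def
  haveI : IsProbabilityMeasure F' := Measure.isProbabilityMeasure_map hdiag.aemeasurable
  haveI : Nonempty (Fin N) := ⟨⟨0, hN0⟩⟩
  have hF'supp : F' {v | ∀ n, IsValuation M vbar (v n)} = 1 := by
    rw [hF'def, Measure.map_apply hdiag (measurableSet_profile M N vbar)]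
    have hpre : diag ⁻¹' {v : Fin N → Valuation M | ∀ n, IsValuation M vbar (v n)}
        = {w | IsValuation M vbar w} := by
      ext w; simp [hdiagdef]
    rw [hpre]; exact hGsupp
  have hmarg : avgMarginal M N F' = G := by
    have hmapn : ∀ n : Fin N, F'.map (fun v => v n) = G := by
      intro n
      rw [hF'def, Measure.map_map (measurable_pi_apply n) hdiag]
      have : ((fun v : Fin N → Valuation M => v n) ∘ diag) = id := rfl
      rw [this, Measure.map_id]
    unfold avgMarginal
    rw [Finset.sum_congr rfl fun n _ => hmapn n, Finset.sum_const,
      Finset.card_univ, Fintype.card_fin, ← Nat.cast_smul_eq_nsmul ℝ≥0∞,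
      smul_smul, ENNReal.inv_mul_cancel (Nat.cast_ne_zero.mpr (by omega))
        (ENNReal.natCast_ne_top N), one_smul]
  have hF'mem : F' ∈ 𝔽 := ⟨⟨inferInstance, hF'supp⟩, by rw [hmarg]; exact hGmem⟩
  -- integrability facts
  have haeP : ∀ᵐ v ∂F, ∀ n, IsValuation M vbar (v n) := by
    rw [ae_iff]
    exact (prob_compl_eq_zero_iff (measurableSet_profile M N vbar)).mpr hFsupp
  have hrankInt : Integrable (fun v => rankGuarantee M N Menu v k) F := by
    refine integrable_of_ae_bound (measurable_rankGuarantee M N Menu k)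
      (C := (Menu.card : ℝ) * vbar) ?_
    filter_upwards [haeP] with v hv
    unfold rankGuarantee
    rw [abs_of_nonneg (maxAlloc_nonneg _ _ _)]
    exact maxAlloc_le_card_vbar M Menu hvbar fun b =>
      kth_le hk1 hkN fun n => ((hv n).2 b).2
  have hmaxInt : ∀ n : Fin N, Integrable (fun v => maxAlloc M Menu (v n)) F := by
    intro n
    refine integrable_of_ae_bound (measurable_maxAlloc_eval M N Menu n)
      (C := (Menu.card : ℝ) * vbar) ?_
    filter_upwards [haeP] with v hv
    rw [abs_of_nonneg (maxAlloc_nonneg _ _ _)]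
    exact maxAlloc_le_card_vbar M Menu hvbar fun b => ((hv n).2 b).2
  -- step 1: Vsurplus F' = ∫ maxAlloc ∂G
  have hrw1 : Vsurplus M N Menu F' = ∫ w, maxAlloc M Menu w ∂G := by
    unfold Vsurplus
    set n0 : Fin N := ⟨0, hN0⟩ with hn0
    have hDmeas : MeasurableSet {v : Fin N → Valuation M | v = fun _ => v n0} := by
      have : {v : Fin N → Valuation M | v = fun _ => v n0}
          = ⋂ n : Fin N, ⋂ b : Bundle M, {v : Fin N → Valuation M | v n b = v n0 b} := by
        ext v
        simp only [Set.mem_setOf_eq, Set.mem_iInter, funext_iff]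
      rw [this]
      exact MeasurableSet.iInter fun n => MeasurableSet.iInter fun b =>
        measurableSet_eq_fun ((measurable_pi_apply b).comp (measurable_pi_apply n))
          ((measurable_pi_apply b).comp (measurable_pi_apply n0))
    have haeD : ∀ᵐ v ∂F', v = fun _ => v n0 := by
      have hcompl : {a : Fin N → Valuation M | ¬ a = fun _ => a n0}
          = {v : Fin N → Valuation M | v = fun _ => v n0}ᶜ := rfl
      rw [ae_iff, hcompl, hF'def, Measure.map_apply hdiag hDmeas.compl]
      convert measure_empty
      · ext w; simp [hdiagdef]
      · infer_instance
    have hcong : (fun v => surplusEx M N Menu v)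
        =ᵐ[F'] fun v => maxAlloc M Menu (v n0) := by
      filter_upwards [haeD] with v hv
      conv_lhs => rw [hv]
      exact surplusEx_diag M N Menu hN (v n0)
    rw [integral_congr_ae hcong, hF'def]
    exact integral_map hdiag.aemeasurable
      ((measurable_maxAlloc' M Menu).comp (measurable_pi_apply n0)).aestronglyMeasurable
  -- step 2: ∫ maxAlloc ∂G = N⁻¹ * ∑ ∫ maxAlloc(v n) ∂F
  have hrw2 : ∫ w, maxAlloc M Menu w ∂G
      = (N:ℝ)⁻¹ * ∑ n : Fin N, ∫ v, maxAlloc M Menu (v n) ∂F := by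
    rw [hG]
    unfold avgMarginal
    rw [integral_smul_measure]
    rw [integral_finset_sum_measure (by
      intro n _
      rw [integrable_map_measure (measurable_maxAlloc' M Menu).aestronglyMeasurable
        (measurable_pi_apply n).aemeasurable]
      exact hmaxInt n)]
    rw [smul_eq_mul]
    congr 1
    · rw [ENNReal.toReal_inv]
      norm_num
    · refine Finset.sum_congr rfl fun n _ => ?_
      exact integral_map (measurable_pi_apply n).aemeasurable
        (measurable_maxAlloc' M Menu).aestronglyMeasurable
  -- step 3: integral inequality
  have hineq : ∑ n : Fin N, ∫ v, maxAlloc M Menu (v n) ∂F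
      ≤ (N:ℝ) * ∫ v, rankGuarantee M N Menu v k ∂F
        + ((k:ℝ) - 1) * (Menu.card : ℝ) * vbar := by
    rw [← integral_finset_sum _ fun n _ => hmaxInt n]
    have hrhs : Integrable (fun v => (N:ℝ) * rankGuarantee M N Menu v k
        + ((k:ℝ) - 1) * (Menu.card : ℝ) * vbar) F :=
      (hrankInt.const_mul _).add (integrable_const _)
    have := integral_mono_ae (integrable_finset_sum Finset.univ fun n _ => hmaxInt n) hrhs
      (by
        filter_upwards [haeP] with v hv
        exact core_ineq M N vbar hvbar Menu k hk1 hkN v hv)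
    calc ∫ v, ∑ n : Fin N, maxAlloc M Menu (v n) ∂F
        ≤ ∫ v, ((N:ℝ) * rankGuarantee M N Menu v k
            + ((k:ℝ) - 1) * (Menu.card : ℝ) * vbar) ∂F := this
      _ = (N:ℝ) * ∫ v, rankGuarantee M N Menu v k ∂F
            + ((k:ℝ) - 1) * (Menu.card : ℝ) * vbar := by
          rw [integral_add (hrankInt.const_mul _) (integrable_const _),
            integral_const_mul, integral_const, probReal_univ, one_smul]
  -- combine
  have hkey : Vsurplus M N Menu F'
      ≤ ∫ v, rankGuarantee M N Menu v k ∂F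
        + ((k:ℝ) - 1) * (Menu.card : ℝ) * vbar / (N:ℝ) := by
    rw [hrw1, hrw2]
    have h2 : (N:ℝ)⁻¹ * (∑ n : Fin N, ∫ v, maxAlloc M Menu (v n) ∂F)
        ≤ (N:ℝ)⁻¹ * ((N:ℝ) * ∫ v, rankGuarantee M N Menu v k ∂F
          + ((k:ℝ) - 1) * (Menu.card : ℝ) * vbar) :=
      mul_le_mul_of_nonneg_left hineq (by positivity)
    calc (N:ℝ)⁻¹ * ∑ n : Fin N, ∫ v, maxAlloc M Menu (v n) ∂F ≤ _ := h2
      _ = ∫ v, rankGuarantee M N Menu v k ∂F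
          + ((k:ℝ) - 1) * (Menu.card : ℝ) * vbar / (N:ℝ) := by
          field_simp
  have h1 : sInf ((fun F => Vsurplus M N Menu F) '' 𝔽) ≤ Vsurplus M N Menu F' :=
    csInf_le hBdd ⟨F', hF'mem, rfl⟩
  simp only
  linarith

end RankGuaranteedAuctions
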